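/- Let D be a domain in ℝ^N, N ≥ 2, and K ≥ 1. If u_j : D → [-∞,∞), j = 1,2,…, are K-quasi-nearly subharmonic (respectively K-quasi-nearly subharmonic n.s.) and u_j ↘ u pointwise as j → ∞, then u is K-quasi-nearly subharmonic (respectively K-quasi-nearly subharmonic n.s.) in D. -/

import Mathlib

open MeasureTheory Metric Set Filter
open scoped ENNReal NNReal Topology

noncomputable section

/-- `ℝ^N` with the Euclidean metric. -/
abbrev Eucl (N : ℕ) := EuclideanSpace ℝ (Fin N)

/-- The positive part of an extended real number, as an element of `ℝ≥0∞`. -/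
noncomputable def ERealPos (x : EReal) : ℝ≥0∞ :=
  if x = ⊤ then ⊤ else ENNReal.ofReal x.toReal

/-- The (extended-real valued) Lebesgue integral of an extended-real valued function:
the upper integral of its positive part minus the upper integral of its negative part. -/
noncomputable def eIntegral {α : Type*} [MeasurableSpace α] (μ : Measure α)
    (f : α → EReal) : EReal :=
  ((∫⁻ a, ERealPos (f a) ∂μ : ℝ≥0∞) : EReal) - ((∫⁻ a, ERealPos (-(f a)) ∂μ : ℝ≥0∞) : EReal)

/-- `u(x) ≤ (K/(ν_N r^N)) ∫_{B(x,r)} u dm_N`; note that `ν_N r^N` is exactly the Lebesgue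
measure of the ball `B^N(x,r)`. -/
def MeanIneqAt {N : ℕ} (K : ℝ) (u : Eucl N → EReal) (x : Eucl N) (r : ℝ) : Prop :=
  u x ≤ ((K / (volume (ball x r)).toReal : ℝ) : EReal) *
    eIntegral (volume.restrict (ball x r)) u

/-- The mean value inequality with constant `K`, for all closed balls contained in `D`. -/
def MeanIneqOn {N : ℕ} (K : ℝ) (u : Eucl N → EReal) (D : Set (Eucl N)) : Prop :=
  ∀ x : Eucl N, ∀ r : ℝ, 0 < r → closedBall x r ⊆ D → MeanIneqAt K u x r

/-- `u⁺ ∈ L¹_loc(D)`: the positive part of `u` is integrable on every compact subset of `D`. -/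
def PosPartLocInt {N : ℕ} (u : Eucl N → EReal) (D : Set (Eucl N)) : Prop :=
  ∀ C : Set (Eucl N), C ⊆ D → IsCompact C → (∫⁻ x in C, ERealPos (u x) ∂volume) < ⊤

/-- `u ∈ L¹_loc(D)` for an extended-real valued `u`. -/
def ERealLocInt {N : ℕ} (u : Eucl N → EReal) (D : Set (Eucl N)) : Prop :=
  PosPartLocInt u D ∧ PosPartLocInt (fun x => -(u x)) D

/-- `u` is nearly subharmonic on `D`. -/
def NearlySubharmonicOn {N : ℕ} (u : Eucl N → EReal) (D : Set (Eucl N)) : Prop :=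
  AEMeasurable u (volume.restrict D) ∧ PosPartLocInt u D ∧ MeanIneqOn 1 u D

/-- `u` is `K`-quasi-nearly subharmonic n.s. (in the narrow sense) on `D`. -/
def QNSubharmonicNSOn {N : ℕ} (K : ℝ) (u : Eucl N → EReal) (D : Set (Eucl N)) : Prop :=
  AEMeasurable u (volume.restrict D) ∧ PosPartLocInt u D ∧ MeanIneqOn K u D

/-- `u_M := max{u, -M} + M`. -/
noncomputable def shiftPos {N : ℕ} (u : Eucl N → EReal) (M : ℝ) : Eucl N → EReal :=
  fun x => max (u x) ((-M : ℝ) : EReal) + ((M : ℝ) : EReal)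

/-- `u` is `K`-quasi-nearly subharmonic on `D`. -/
def QNSubharmonicOn {N : ℕ} (K : ℝ) (u : Eucl N → EReal) (D : Set (Eucl N)) : Prop :=
  AEMeasurable u (volume.restrict D) ∧ PosPartLocInt u D ∧
    ∀ M : ℝ, 0 ≤ M → MeanIneqOn K (shiftPos u M) D

/-- `u` is subharmonic on `D`: upper semicontinuous and satisfying the mean value
inequality on all closed balls contained in `D` (the constant `-∞` is allowed). -/
def SubharmonicOn {N : ℕ} (u : Eucl N → EReal) (D : Set (Eucl N)) : Prop :=
  UpperSemicontinuousOn u D ∧ MeanIneqOn 1 u D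

/-- `h` is harmonic on `D`: continuous and satisfying the mean value equality. -/
def HarmonicMVOn {N : ℕ} (h : Eucl N → ℝ) (D : Set (Eucl N)) : Prop :=
  ContinuousOn h D ∧ ∀ x : Eucl N, ∀ r : ℝ, 0 < r → closedBall x r ⊆ D →
    h x = ⨍ y in ball x r, h y ∂volume

/-- The Δ₂-condition for a function on `[0,∞)`. -/
def Delta2 (φ : ℝ → ℝ) : Prop :=
  ∃ C ≥ (1 : ℝ), ∀ t ≥ (0 : ℝ), φ (2 * t) ≤ C * φ t

/-- Permissible functions `ψ : [0,∞) → [0,∞)`. -/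
def Permissible (ψ : ℝ → ℝ) : Prop :=
  ∃ ψ₁ ψ₂ : ℝ → ℝ,
    (∀ t ≥ (0 : ℝ), 0 ≤ ψ₁ t) ∧ MonotoneOn ψ₁ (Ici 0) ∧ ConvexOn ℝ (Ici 0) ψ₁ ∧
    Delta2 ψ₁ ∧
    (∀ t ≥ (0 : ℝ), 0 ≤ ψ₂ t) ∧ StrictMonoOn ψ₂ (Ici 0) ∧
    (∀ s ≥ (0 : ℝ), ∃ t ≥ (0 : ℝ), ψ₂ t = s) ∧
    (∃ C ≥ (1 : ℝ), ∀ s a b : ℝ, 0 ≤ s → 0 ≤ a → 0 ≤ b →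
      ψ₂ a = s → ψ₂ b = 2 * s → b ≤ C * a) ∧
    (∃ C > (0 : ℝ), ∀ s t : ℝ, 0 ≤ s → s ≤ t → C * (ψ₂ t / t) ≤ ψ₂ s / s) ∧
    (∀ t ≥ (0 : ℝ), ψ t = ψ₂ (ψ₁ t))

/-- `ψ` is non-constant on `[0,∞)`. -/
def NonConstantOnNonneg (ψ : ℝ → ℝ) : Prop :=
  ∃ s ≥ (0 : ℝ), ∃ t ≥ (0 : ℝ), ψ s ≠ ψ t

/-- `u` is a `λ`-Harnack function on `D`. -/
def HarnackOn {N : ℕ} (lam : ℝ) (u : Eucl N → ℝ) (D : Set (Eucl N)) : Prop :=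
  ContinuousOn u D ∧ (∀ x ∈ D, 0 ≤ u x) ∧
    ∃ C ≥ (1 : ℝ), ∀ x : Eucl N, ∀ r : ℝ, 0 < r → closedBall x r ⊆ D →
      ∀ z₁ ∈ closedBall x (lam * r), ∀ z₂ ∈ closedBall x (lam * r), u z₁ ≤ C * u z₂

/-- Lebesgue measure of the unit ball in `ℝ^N`. -/
noncomputable def unitBallVol (N : ℕ) : ℝ := (volume (ball (0 : Eucl N) 1)).toReal

/-- Identify `ℝ^m × ℝ^n` with `ℝ^(m+n)`. -/
noncomputable def joinE {m n : ℕ} (x : Eucl m) (y : Eucl n) : Eucl (m + n) :=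
  (EuclideanSpace.equiv (Fin (m + n)) ℝ).symm
    (Fin.append (EuclideanSpace.equiv (Fin m) ℝ x) (EuclideanSpace.equiv (Fin n) ℝ y))

/-- The section `Ω(y) = {x ∈ ℝ^m : (x,y) ∈ Ω}`. -/
def secY {m n : ℕ} (Ω : Set (Eucl (m + n))) (y : Eucl n) : Set (Eucl m) :=
  {x : Eucl m | joinE x y ∈ Ω}

/-- The section `Ω(x) = {y ∈ ℝ^n : (x,y) ∈ Ω}`. -/
def secX {m n : ℕ} (Ω : Set (Eucl (m + n))) (x : Eucl m) : Set (Eucl n) :=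
  {y : Eucl n | joinE x y ∈ Ω}


section AuxLimit

lemma ERealPos_coe (c : ℝ) : ERealPos (c : EReal) = ENNReal.ofReal c := by
  simp [ERealPos]

lemma ERealPos_bot : ERealPos (⊥ : EReal) = 0 := by
  simp [ERealPos]

lemma ERealPos_mono : Monotone ERealPos := by
  intro a b hab
  rcases eq_or_ne b ⊤ with hb | hb
  · simp [ERealPos, hb]
  · have ha : a ≠ ⊤ := fun h => hb (top_le_iff.1 (h ▸ hab))
    rw [ERealPos, ERealPos, if_neg ha, if_neg hb]
    rcases eq_or_ne a ⊥ with rfl | ha'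
    · simp
    · exact ENNReal.ofReal_le_ofReal (EReal.toReal_le_toReal hab ha' hb)

lemma ERealPos_neg_of_lt (a : EReal) (h : a < 0) : ERealPos a = 0 := by
  induction a using EReal.rec with
  | bot => exact ERealPos_bot
  | coe r =>
    have hr : r < 0 := by exact_mod_cast h
    simp [ERealPos, ENNReal.ofReal_eq_zero, hr.le]
  | top => exact absurd h (by simp)

lemma continuous_ERealPos : Continuous ERealPos := by
  rw [continuous_iff_continuousAt]
  intro a
  induction a using EReal.rec with
  | bot =>
    rw [ContinuousAt, ERealPos_bot]
    refine Tendsto.congr' ?_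
      (tendsto_const_nhds : Tendsto (fun _ : EReal => (0 : ℝ≥0∞)) (𝓝 ⊥) (𝓝 0))
    filter_upwards [Iio_mem_nhds (show (⊥ : EReal) < 0 by simp)] with y hy
    exact (ERealPos_neg_of_lt y (mem_Iio.mp hy)).symm
  | coe r =>
    rw [ContinuousAt, ERealPos_coe]
    have ht : Tendsto (fun y : EReal => ENNReal.ofReal y.toReal) (𝓝 (r : EReal))
        (𝓝 (ENNReal.ofReal r)) := by
      have h1 := EReal.tendsto_toReal (a := (r : EReal)) (by simp) (by simp)
      have h2 := (ENNReal.continuous_ofReal.tendsto (EReal.toReal (r : EReal))).comp h1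
      simpa [Function.comp_def] using h2
    refine Tendsto.congr' ?_ ht
    filter_upwards [Iio_mem_nhds (EReal.coe_lt_top r)] with y hy
    simp [ERealPos, (mem_Iio.mp hy).ne]
  | top =>
    rw [ContinuousAt, show ERealPos ⊤ = ⊤ by simp [ERealPos]]
    rw [ENNReal.tendsto_nhds_top_iff_nnreal]
    intro x
    filter_upwards [Ioi_mem_nhds (EReal.coe_lt_top ((x : ℝ) + 1))] with y hy
    have h1 : ENNReal.ofReal ((x : ℝ) + 1) ≤ ERealPos y := by
      rw [← ERealPos_coe]; exact ERealPos_mono (mem_Ioi.mp hy).le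
    refine lt_of_lt_of_le ?_ h1
    rw [show ((x : ℝ≥0) : ℝ≥0∞) = ENNReal.ofReal (x : ℝ) from ENNReal.ofReal_coe_nnreal.symm]
    exact (ENNReal.ofReal_lt_ofReal_iff (by positivity)).2 (by linarith)

lemma tendsto_eIntegral_aux {α : Type*} [MeasurableSpace α] {μ : Measure α}
    (v : ℕ → α → EReal) (w : α → EReal)
    (hmeas : ∀ j, AEMeasurable (v j) μ)
    (hanti : ∀ᵐ x ∂μ, Antitone fun j => v j x)
    (hlim : ∀ᵐ x ∂μ, Tendsto (fun j => v j x) atTop (𝓝 (w x)))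
    (hfin : (∫⁻ x, ERealPos (v 0 x) ∂μ) ≠ ⊤) :
    Tendsto (fun j => eIntegral μ (v j)) atTop (𝓝 (eIntegral μ w)) := by
  have hmeasP : ∀ j, AEMeasurable (fun x => ERealPos (v j x)) μ := fun j =>
    continuous_ERealPos.measurable.comp_aemeasurable (hmeas j)
  have hmeasQ : ∀ j, AEMeasurable (fun x => ERealPos (-(v j x))) μ := fun j =>
    continuous_ERealPos.measurable.comp_aemeasurable (hmeas j).neg
  have hP : Tendsto (fun j => ∫⁻ x, ERealPos (v j x) ∂μ) atTop
      (𝓝 (∫⁻ x, ERealPos (w x) ∂μ)) := by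
    refine tendsto_lintegral_of_dominated_convergence' (fun x => ERealPos (v 0 x))
      hmeasP ?_ hfin ?_
    · intro j
      filter_upwards [hanti] with x hx
      exact ERealPos_mono (hx (Nat.zero_le j))
    · filter_upwards [hlim] with x hx
      exact (continuous_ERealPos.tendsto _).comp hx
  have hQ : Tendsto (fun j => ∫⁻ x, ERealPos (-(v j x)) ∂μ) atTop
      (𝓝 (∫⁻ x, ERealPos (-(w x)) ∂μ)) := by
    refine lintegral_tendsto_of_tendsto_of_monotone hmeasQ ?_ ?_
    · filter_upwards [hanti] with x hx
      exact fun i j hij => ERealPos_mono (EReal.neg_le_neg_iff.2 (hx hij))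
    · filter_upwards [hlim] with x hx
      exact (continuous_ERealPos.tendsto _).comp hx.neg
  have hPfin : (∫⁻ x, ERealPos (w x) ∂μ) ≠ ⊤ := by
    refine ne_top_of_le_ne_top hfin (lintegral_mono_ae ?_)
    filter_upwards [hanti, hlim] with x hx hx'
    exact ERealPos_mono (le_of_tendsto hx' (Eventually.of_forall fun j => hx (Nat.zero_le j)))
  unfold eIntegral
  simp only [sub_eq_add_neg]
  have h1 : Tendsto (fun j => ((∫⁻ x, ERealPos (v j x) ∂μ : ℝ≥0∞) : EReal)) atTop
      (𝓝 ((∫⁻ x, ERealPos (w x) ∂μ : ℝ≥0∞) : EReal)) :=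
    (continuous_coe_ennreal_ereal.tendsto _).comp hP
  have h2 : Tendsto (fun j => -((∫⁻ x, ERealPos (-(v j x)) ∂μ : ℝ≥0∞) : EReal)) atTop
      (𝓝 (-((∫⁻ x, ERealPos (-(w x)) ∂μ : ℝ≥0∞) : EReal))) :=
    ((continuous_coe_ennreal_ereal.tendsto _).comp hQ).neg
  have hadd : ContinuousAt (fun p : EReal × EReal => p.1 + p.2)
      (((∫⁻ x, ERealPos (w x) ∂μ : ℝ≥0∞) : EReal),
        -((∫⁻ x, ERealPos (-(w x)) ∂μ : ℝ≥0∞) : EReal)) := by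
    refine EReal.continuousAt_add (Or.inl ?_) (Or.inl ?_)
    · simpa [EReal.coe_ennreal_eq_top_iff] using hPfin
    · simp
  exact hadd.tendsto.comp (h1.prodMk_nhds h2)

lemma meanIneq_limit {N : ℕ} {K : ℝ} (hK0 : 0 < K) {D : Set (Eucl N)}
    (v : ℕ → Eucl N → EReal) (w : Eucl N → EReal)
    (hmeas : ∀ j, AEMeasurable (v j) (volume.restrict D))
    (hDm : MeasurableSet D)
    (hanti : ∀ x ∈ D, Antitone fun j => v j x)
    (hlim : ∀ x ∈ D, Tendsto (fun j => v j x) atTop (𝓝 (w x)))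
    (hfin : PosPartLocInt (v 0) D)
    (hmi : ∀ j, MeanIneqOn K (v j) D) :
    MeanIneqOn K w D := by
  intro x r hr hball
  have hxD : x ∈ D := hball (mem_closedBall_self hr.le)
  have hsD : ball x r ⊆ D := ball_subset_closedBall.trans hball
  set μ := volume.restrict (ball x r) with hμ
  have hmeas' : ∀ j, AEMeasurable (v j) μ := fun j =>
    (hmeas j).mono_measure (Measure.restrict_mono hsD le_rfl)
  have hmem : ∀ᵐ y ∂μ, y ∈ ball x r := ae_restrict_mem measurableSet_ball
  have hfin0 : (∫⁻ y, ERealPos (v 0 y) ∂μ) ≠ ⊤ := by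
    refine ne_of_lt (lt_of_le_of_lt (lintegral_mono_set ball_subset_closedBall) ?_)
    exact hfin _ hball (isCompact_closedBall x r)
  have hE : Tendsto (fun j => eIntegral μ (v j)) atTop (𝓝 (eIntegral μ w)) := by
    refine tendsto_eIntegral_aux v w hmeas' ?_ ?_ hfin0
    · filter_upwards [hmem] with y hy
      exact hanti y (hsD hy)
    · filter_upwards [hmem] with y hy
      exact hlim y (hsD hy)
  set c : ℝ := K / (volume (ball x r)).toReal with hc
  have hvol : 0 < (volume (ball x r)).toReal :=
    ENNReal.toReal_pos (measure_ball_pos _ _ hr).ne' measure_ball_lt_top.ne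
  have hcpos : 0 < c := div_pos hK0 hvol
  have hmul : Tendsto (fun j => ((c : ℝ) : EReal) * eIntegral μ (v j)) atTop
      (𝓝 (((c : ℝ) : EReal) * eIntegral μ w)) := by
    have hca : ContinuousAt (fun p : EReal × EReal => p.1 * p.2)
        (((c : ℝ) : EReal), eIntegral μ w) := by
      refine EReal.continuousAt_mul (Or.inl ?_) (Or.inl ?_) (Or.inl ?_) (Or.inl ?_)
      · exact (by exact_mod_cast hcpos.ne' : ((c : ℝ) : EReal) ≠ 0)
      · exact (by exact_mod_cast hcpos.ne' : ((c : ℝ) : EReal) ≠ 0)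
      · exact (by simp : ((c : ℝ) : EReal) ≠ ⊥)
      · exact (by simp : ((c : ℝ) : EReal) ≠ ⊤)
    exact hca.tendsto.comp (tendsto_const_nhds.prodMk_nhds hE)
  exact le_of_tendsto_of_tendsto' (hlim x hxD) hmul (fun j => hmi j x r hr hball)

lemma continuous_shiftFun (M : ℝ) :
    Continuous fun a : EReal => max a ((-M : ℝ) : EReal) + ((M : ℝ) : EReal) := by
  have h1 : Continuous fun a : EReal => max a ((-M : ℝ) : EReal) :=
    continuous_id.max continuous_const
  have h2 : Continuous fun a : EReal => a + ((M : ℝ) : EReal) := by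
    rw [continuous_iff_continuousAt]
    intro a
    have hf : ContinuousAt (fun b : EReal => (b, ((M : ℝ) : EReal))) a :=
      (continuous_id.prodMk continuous_const).continuousAt
    exact ContinuousAt.comp (f := fun b : EReal => (b, ((M : ℝ) : EReal)))
      (EReal.continuousAt_add (p := (a, ((M : ℝ) : EReal))) (Or.inr (by simp))
        (Or.inr (by simp))) hf
  exact h2.comp h1

lemma monotone_shiftFun (M : ℝ) :
    Monotone fun a : EReal => max a ((-M : ℝ) : EReal) + ((M : ℝ) : EReal) := fun a b h =>
  add_le_add_left (max_le_max h le_rfl) _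

lemma shiftFun_ne_top (M : ℝ) {a : EReal} (ha : a ≠ ⊤) :
    max a ((-M : ℝ) : EReal) + ((M : ℝ) : EReal) ≠ ⊤ :=
  (EReal.add_lt_top (max_lt ha.lt_top (EReal.coe_lt_top _)).ne (EReal.coe_lt_top M).ne).ne

lemma ERealPos_shiftFun_le (M : ℝ) (hM : 0 ≤ M) (a : EReal) (ha : a ≠ ⊤) :
    ERealPos (max a ((-M : ℝ) : EReal) + ((M : ℝ) : EReal)) ≤ ERealPos a + ENNReal.ofReal M := by
  induction a using EReal.rec with
  | bot =>
    rw [max_eq_right bot_le, ← EReal.coe_add, ERealPos_coe, ERealPos_bot]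
    simp
  | coe r =>
    rw [show max (r : EReal) ((-M : ℝ) : EReal) = ((max r (-M) : ℝ) : EReal) from
      (EReal.coe_strictMono.monotone.map_max).symm, ← EReal.coe_add, ERealPos_coe, ERealPos_coe]
    rcases le_or_gt 0 r with h0 | h0
    · rw [max_eq_left (by linarith), ENNReal.ofReal_add h0 hM]
    · calc ENNReal.ofReal (max r (-M) + M) ≤ ENNReal.ofReal (0 + M) := by
            refine ENNReal.ofReal_le_ofReal ?_
            have : max r (-M) ≤ 0 := max_le h0.le (by linarith)
            linarith
        _ ≤ ENNReal.ofReal r + ENNReal.ofReal M := by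
            rw [zero_add]; exact le_add_self
  | top => exact absurd rfl ha

lemma posPartLocInt_mono {N : ℕ} {v w : Eucl N → EReal} {D : Set (Eucl N)}
    (hle : ∀ x ∈ D, w x ≤ v x) (hv : PosPartLocInt v D) : PosPartLocInt w D := by
  intro C hCD hC
  refine lt_of_le_of_lt (lintegral_mono_ae ?_) (hv C hCD hC)
  filter_upwards [ae_restrict_mem hC.measurableSet] with y hy
  exact ERealPos_mono (hle y (hCD hy))

lemma posPartLocInt_shift {N : ℕ} {u : Eucl N → EReal} {D : Set (Eucl N)}
    (hu : PosPartLocInt u D) (htop : ∀ x ∈ D, u x ≠ ⊤) (M : ℝ) (hM : 0 ≤ M) :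
    PosPartLocInt (shiftPos u M) D := by
  intro C hCD hC
  have hle : (∫⁻ y in C, ERealPos (shiftPos u M y) ∂volume) ≤
      ∫⁻ y in C, (ERealPos (u y) + ENNReal.ofReal M) ∂volume := by
    refine lintegral_mono_ae ?_
    filter_upwards [ae_restrict_mem hC.measurableSet] with y hy
    exact ERealPos_shiftFun_le M hM (u y) (htop y (hCD hy))
  refine lt_of_le_of_lt hle ?_
  rw [lintegral_add_right _ measurable_const, lintegral_const,
    Measure.restrict_apply MeasurableSet.univ, Set.univ_inter]
  exact ENNReal.add_lt_top.2 ⟨hu C hCD hC,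
    ENNReal.mul_lt_top ENNReal.ofReal_lt_top hC.measure_lt_top⟩

end AuxLimit

/-- a decreasing pointwise limit of `K`-quasi-nearly subharmonic
(resp. `K`-quasi-nearly subharmonic n.s.) functions is again such. -/
theorem qns_of_antitone_limit
    {N : ℕ} (hN : 2 ≤ N) (D : Set (Eucl N)) (hDopen : IsOpen D) (hDconn : IsConnected D)
    (K : ℝ) (hK : 1 ≤ K) (useq : ℕ → Eucl N → EReal) (u : Eucl N → EReal)
    (h_top : ∀ j, ∀ x ∈ D, useq j x ≠ ⊤)
    (h_anti : ∀ x ∈ D, Antitone fun j => useq j x)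
    (h_lim : ∀ x ∈ D, Filter.Tendsto (fun j => useq j x) Filter.atTop (𝓝 (u x))) :
    ((∀ j, QNSubharmonicOn K (useq j) D) → QNSubharmonicOn K u D) ∧
    ((∀ j, QNSubharmonicNSOn K (useq j) D) → QNSubharmonicNSOn K u D) := by
  have hK0 : 0 < K := lt_of_lt_of_le one_pos hK
  have hDm : MeasurableSet D := hDopen.measurableSet
  have hle : ∀ x ∈ D, u x ≤ useq 0 x := fun x hx =>
    le_of_tendsto (h_lim x hx) (Eventually.of_forall fun j => h_anti x hx (Nat.zero_le j))
  have hutop : ∀ x ∈ D, u x ≠ ⊤ := fun x hx => ne_top_of_le_ne_top (h_top 0 x hx) (hle x hx)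
  have hmeasu : (∀ j, AEMeasurable (useq j) (volume.restrict D)) →
      AEMeasurable u (volume.restrict D) := by
    intro hm
    refine aemeasurable_of_tendsto_metrizable_ae atTop hm ?_
    rw [ae_restrict_iff' hDm]
    exact Eventually.of_forall h_lim
  constructor
  · intro h
    refine ⟨hmeasu fun j => (h j).1, posPartLocInt_mono hle (h 0).2.1, ?_⟩
    intro M hM
    refine meanIneq_limit hK0 (fun j => shiftPos (useq j) M) (shiftPos u M)
      (fun j => (continuous_shiftFun M).measurable.comp_aemeasurable (h j).1) hDm
      (fun x hx i j hij => monotone_shiftFun M (h_anti x hx hij))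
      (fun x hx => ((continuous_shiftFun M).tendsto _).comp (h_lim x hx))
      (posPartLocInt_shift (h 0).2.1 (h_top 0) M hM)
      (fun j => (h j).2.2 M hM)
  · intro h
    refine ⟨hmeasu fun j => (h j).1, posPartLocInt_mono hle (h 0).2.1, ?_⟩
    exact meanIneq_limit hK0 useq u (fun j => (h j).1) hDm h_anti h_lim (h 0).2.1
      (fun j => (h j).2.2)
end
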